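/- Let ν > 1 be a real number and r an integer, and let ψ be a minimal (≥ν,<r)-tangle. Then ord(ψ) ≥ 1. -/

import Mathlib

open scoped Classical

structure Multigraph : Type 1 where
  V : Type
  E : Type
  fintypeV : Fintype V
  fintypeE : Fintype E
  head : E → V
  tail : E → V
  inv : E → E
  inv_inv : ∀ e, inv (inv e) = e
  tail_inv : ∀ e, tail (inv e) = head e

attribute [instance] Multigraph.fintypeV Multigraph.fintypeE

namespace Multigraph

noncomputable instance (G : Multigraph) : DecidableEq G.V := Classical.decEq _
noncomputable instance (G : Multigraph) : DecidableEq G.E := Classical.decEq _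

/-- The relation identifying a directed edge with its reversal; undirected
edges are the orbits of the involution, i.e. the classes of (the equivalence
closure of) this relation. -/
def edgeRel (G : Multigraph) (e f : G.E) : Prop := f = e ∨ f = G.inv e

/-- The number of undirected edges, `#E_G`. -/
noncomputable def edgeCard (G : Multigraph) : ℕ := Nat.card (Quot G.edgeRel)

/-- The order `ord(G) = #E_G - #V_G`. -/
noncomputable def ord (G : Multigraph) : ℤ :=
  (G.edgeCard : ℤ) - (Nat.card G.V : ℤ)

/-- The Euler characteristic `χ(G) = #V_G - #Edir_G / 2`. -/
noncomputable def eulerChar (G : Multigraph) : ℚ :=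
  (Nat.card G.V : ℚ) - (Nat.card G.E : ℚ) / 2

/-- The Hashimoto (non-backtracking) matrix. -/
noncomputable def hashimoto (G : Multigraph) : Matrix G.E G.E ℂ :=
  fun e f => if G.head e = G.tail f ∧ G.inv e ≠ f then 1 else 0

/-- `μ₁(G)`: the spectral radius of the Hashimoto matrix. -/
noncomputable def mu1 (G : Multigraph) : ℝ :=
  sSup {x : ℝ | ∃ z ∈ spectrum ℂ G.hashimoto, x = ‖z‖}

def Adj (G : Multigraph) (v w : G.V) : Prop :=
  ∃ e : G.E, G.tail e = v ∧ G.head e = w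

/-- `G` is connected: nonempty, and any two vertices are joined by a walk. -/
def Connected (G : Multigraph) : Prop :=
  Nonempty G.V ∧ ∀ v w : G.V, Relation.ReflTransGen G.Adj v w

/-- The degree of a vertex: the number of directed edges with head `v`. -/
noncomputable def degree (G : Multigraph) (v : G.V) : ℕ :=
  Nat.card {e : G.E // G.head e = v}

/-- A graph is pruned if every vertex has degree at least 2. -/
def Pruned (G : Multigraph) : Prop := ∀ v : G.V, 2 ≤ G.degree v

/-- A subgraph: subsets of vertices and directed edges, closed under the
involution and containing the endpoints of its directed edges. -/
structure Subgraph (G : Multigraph) where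
  verts : Set G.V
  edges : Set G.E
  inv_mem : ∀ e ∈ edges, G.inv e ∈ edges
  head_mem : ∀ e ∈ edges, G.head e ∈ verts
  tail_mem : ∀ e ∈ edges, G.tail e ∈ verts

/-- The multigraph underlying a subgraph. -/
noncomputable def Subgraph.graph {G : Multigraph} (S : G.Subgraph) : Multigraph where
  V := {v : G.V // v ∈ S.verts}
  E := {e : G.E // e ∈ S.edges}
  fintypeV := Fintype.ofFinite _
  fintypeE := Fintype.ofFinite _
  head := fun e => ⟨G.head e.1, S.head_mem e.1 e.2⟩
  tail := fun e => ⟨G.tail e.1, S.tail_mem e.1 e.2⟩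
  inv := fun e => ⟨G.inv e.1, S.inv_mem e.1 e.2⟩
  inv_inv := fun e => Subtype.ext (G.inv_inv e.1)
  tail_inv := fun e => Subtype.ext (G.tail_inv e.1)

/-- A subgraph is proper if it is not the whole graph. -/
def Subgraph.Proper {G : Multigraph} (S : G.Subgraph) : Prop :=
  S.verts ≠ Set.univ ∨ S.edges ≠ Set.univ

/-- Isomorphism of multigraphs. -/
structure Iso (G H : Multigraph) where
  vEquiv : G.V ≃ H.V
  eEquiv : G.E ≃ H.E
  map_head : ∀ e, H.head (eEquiv e) = vEquiv (G.head e)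
  map_tail : ∀ e, H.tail (eEquiv e) = vEquiv (G.tail e)
  map_inv : ∀ e, H.inv (eEquiv e) = eEquiv (G.inv e)

end Multigraph

/-- A `(≥ν,<r)`-tangle: a connected graph `ψ` with `μ₁(ψ) ≥ ν` and `ord(ψ) < r`. -/
def IsTangle (ν : ℝ) (r : ℤ) (ψ : Multigraph) : Prop :=
  ψ.Connected ∧ ν ≤ ψ.mu1 ∧ ψ.ord < r

/-- A minimal `(≥ν,<r)`-tangle: no proper subgraph is a `(≥ν,<r)`-tangle. -/
def IsMinimalTangle (ν : ℝ) (r : ℤ) (ψ : Multigraph) : Prop :=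
  IsTangle ν r ψ ∧ ∀ S : ψ.Subgraph, S.Proper → ¬ IsTangle ν r S.graph


/-! ### Auxiliary lemmas -/

attribute [local instance] Matrix.linftyOpNormedRing Matrix.linftyOpNormedAlgebra

namespace Multigraph

variable (G : Multigraph)

theorem head_inv (f : G.E) : G.head (G.inv f) = G.tail f := by
  conv_rhs => rw [← G.inv_inv f, G.tail_inv]

theorem edgeRel_equivalence : Equivalence G.edgeRel := by
  constructor
  · intro x; exact Or.inl rfl
  · rintro x y (rfl | rfl)
    · exact Or.inl rfl
    · exact Or.inr (G.inv_inv x).symm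
  · rintro x y z (rfl | rfl) (rfl | rfl)
    · exact Or.inl rfl
    · exact Or.inr rfl
    · exact Or.inr rfl
    · rw [G.inv_inv]; exact Or.inl rfl

theorem quot_mk_eq_iff (a b : G.E) :
    Quot.mk G.edgeRel a = Quot.mk G.edgeRel b ↔ G.edgeRel a b := by
  rw [Quot.eq, (G.edgeRel_equivalence).eqvGen_iff]

noncomputable instance : Fintype (Quot G.edgeRel) := Fintype.ofFinite _

theorem degree_eq_card_filter (v : G.V) :
    G.degree v = (Finset.univ.filter fun e => G.head e = v).card := by
  rw [degree, Nat.card_eq_fintype_card, Fintype.card_subtype]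

theorem card_tail_filter (v : G.V) :
    (Finset.univ.filter fun e => G.tail e = v).card = G.degree v := by
  rw [degree_eq_card_filter]
  apply Finset.card_bij' (fun f _ => G.inv f) (fun f _ => G.inv f)
  · intro a ha
    simp only [Finset.mem_filter, Finset.mem_univ, true_and] at ha ⊢
    rw [← ha, head_inv]
  · intro a ha
    simp only [Finset.mem_filter, Finset.mem_univ, true_and] at ha ⊢
    rw [← ha, tail_inv]
  · intro a _; exact G.inv_inv a
  · intro a _; exact G.inv_inv a

theorem sum_degree : ∑ v : G.V, G.degree v = Fintype.card G.E := by
  simp_rw [degree_eq_card_filter]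
  rw [← Finset.card_univ,
    Finset.card_eq_sum_card_fiberwise (f := G.head) (t := Finset.univ)
      (fun x _ => Finset.mem_univ _)]

theorem card_E_le : Fintype.card G.E ≤ 2 * G.edgeCard := by
  have h : Fintype.card G.E ≤ 2 * (Finset.univ.image (Quot.mk G.edgeRel)).card := by
    rw [← Finset.card_univ]
    apply Finset.card_le_mul_card_image
    intro b _
    have hsub : (Finset.univ.filter fun a => Quot.mk G.edgeRel a = b)
        ⊆ {b.out, G.inv b.out} := by
      intro f hf
      simp only [Finset.mem_filter, Finset.mem_univ, true_and] at hf
      have hq : Quot.mk G.edgeRel f = Quot.mk G.edgeRel b.out := by rw [hf, Quot.out_eq]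
      rw [quot_mk_eq_iff] at hq
      rcases hq with h1 | h1
      · simp [← h1]
      · have h2 := congrArg G.inv h1
        rw [G.inv_inv] at h2
        simp [h2]
    calc (Finset.univ.filter fun a => Quot.mk G.edgeRel a = b).card
        ≤ ({b.out, G.inv b.out} : Finset G.E).card := Finset.card_le_card hsub
      _ ≤ 2 := (Finset.card_insert_le _ _).trans (by simp)
  refine h.trans ?_
  have h2 : (Finset.univ.image (Quot.mk G.edgeRel)).card ≤ G.edgeCard := by
    rw [edgeCard, Nat.card_eq_fintype_card, ← Finset.card_univ]
    exact Finset.card_le_card (Finset.subset_univ _)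
  omega

theorem mu1_le_of_bound {C : ℝ} (hC : 0 ≤ C)
    (h : ∀ z ∈ spectrum ℂ G.hashimoto, ‖z‖ ≤ C) : G.mu1 ≤ C :=
  Real.sSup_le (by rintro x ⟨z, hz, rfl⟩; exact h z hz) hC

theorem mem_spectrum_iff_eig {n : Type} [Fintype n] (M : Matrix n n ℂ) (z : ℂ) :
    z ∈ spectrum ℂ M ↔ ∃ u, u ≠ 0 ∧ M.mulVec u = z • u := by
  rw [spectrum.mem_iff, Matrix.isUnit_iff_isUnit_det, isUnit_iff_ne_zero, not_ne_iff,
    ← Matrix.exists_mulVec_eq_zero_iff]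
  constructor
  · rintro ⟨u, hu, h⟩
    refine ⟨u, hu, ?_⟩
    rw [Algebra.algebraMap_eq_smul_one, Matrix.sub_mulVec, Matrix.smul_mulVec,
      Matrix.one_mulVec, sub_eq_zero] at h
    exact h.symm
  · rintro ⟨u, hu, h⟩
    refine ⟨u, hu, ?_⟩
    rw [Algebra.algebraMap_eq_smul_one, Matrix.sub_mulVec, Matrix.smul_mulVec,
      Matrix.one_mulVec, sub_eq_zero, h]

theorem mu1_le_one [Nonempty G.E] (hdeg : ∀ w, G.degree w ≤ 2) : G.mu1 ≤ 1 := by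
  have hrow : ∀ g : G.E, ∑ f, ‖G.hashimoto g f‖₊ ≤ 1 := by
    intro g
    have hval : ∀ f, ‖G.hashimoto g f‖₊
        = if G.head g = G.tail f ∧ G.inv g ≠ f then 1 else 0 := by
      intro f
      simp only [hashimoto]
      split_ifs <;> simp
    calc ∑ f, ‖G.hashimoto g f‖₊
        = ((Finset.univ.filter fun f => G.head g = G.tail f ∧ G.inv g ≠ f).card : NNReal) := by
          simp_rw [hval]; rw [Finset.sum_boole]
      _ ≤ 1 := by
          norm_cast
          have hsub : (Finset.univ.filter fun f => G.head g = G.tail f ∧ G.inv g ≠ f)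
              ⊆ (Finset.univ.filter fun f => G.tail f = G.head g).erase (G.inv g) := by
            intro f hf
            simp only [Finset.mem_filter, Finset.mem_univ, true_and] at hf
            rw [Finset.mem_erase]
            exact ⟨fun h => hf.2 h.symm, by simp [hf.1.symm]⟩
          have hmem : G.inv g ∈ Finset.univ.filter fun f => G.tail f = G.head g := by
            simp [G.tail_inv]
          calc (Finset.univ.filter fun f => G.head g = G.tail f ∧ G.inv g ≠ f).card
              ≤ ((Finset.univ.filter fun f => G.tail f = G.head g).erase (G.inv g)).card :=
                Finset.card_le_card hsub
            _ = (Finset.univ.filter fun f => G.tail f = G.head g).card - 1 :=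
                Finset.card_erase_of_mem hmem
            _ ≤ 1 := by
                have := G.card_tail_filter (G.head g)
                have := hdeg (G.head g)
                omega
  have hnorm : ‖G.hashimoto‖ ≤ 1 := by
    have h1 : ‖G.hashimoto‖₊ ≤ 1 := by
      rw [Matrix.linfty_opNNNorm_def]
      exact Finset.sup_le fun i _ => hrow i
    exact_mod_cast h1
  apply G.mu1_le_of_bound zero_le_one
  intro z hz
  exact (spectrum.norm_le_norm_of_mem hz).trans hnorm

theorem mu1_empty_le (hE : IsEmpty G.E) : G.mu1 ≤ 1 := by
  apply G.mu1_le_of_bound zero_le_one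
  intro z hz
  have : Subsingleton (Matrix G.E G.E ℂ) := ⟨fun a b => by ext i j; exact (hE.false i).elim⟩
  rw [spectrum.mem_iff] at hz
  exact absurd (isUnit_of_subsingleton _) hz

theorem card_ne_add_one {α : Type} [Finite α] (x : α) :
    Nat.card {y : α // y ≠ x} + 1 = Nat.card α := by
  have e1 : {y : α // y ≠ x} ⊕ Unit ≃ α := by
    refine Equiv.ofBijective (Sum.elim (fun y => y.1) (fun _ => x)) ⟨?_, ?_⟩
    · rintro (a | a) (b | b) h
      · simp only [Sum.elim_inl] at h; exact congrArg Sum.inl (Subtype.ext h)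
      · exact absurd h a.2
      · exact absurd h.symm b.2
      · rfl
    · intro y
      by_cases h : y = x
      · exact ⟨Sum.inr Unit.unit, h.symm⟩
      · exact ⟨Sum.inl ⟨y, h⟩, rfl⟩
  calc Nat.card {y : α // y ≠ x} + 1 = Nat.card ({y : α // y ≠ x} ⊕ Unit) := by
        simp [Nat.card_sum]
    _ = Nat.card α := Nat.card_congr e1

/-- The subgraph obtained by deleting a leaf vertex `v` and its unique edge pair. -/
def lsub (G : Multigraph) {v : G.V} {e : G.E}
    (huniq : ∀ f, G.head f = v → f = e) : G.Subgraph where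
  verts := {w | w ≠ v}
  edges := {f | f ≠ e ∧ f ≠ G.inv e}
  inv_mem := by
    rintro f ⟨h1, h2⟩
    constructor
    · intro h
      apply h2
      rw [← h, G.inv_inv]
    · intro h
      apply h1
      have h3 := congrArg G.inv h
      rwa [G.inv_inv, G.inv_inv] at h3
  head_mem := by
    rintro f ⟨h1, h2⟩ h
    exact h1 (huniq f h)
  tail_mem := by
    rintro f ⟨h1, h2⟩ h
    apply h2
    have h3 : G.head (G.inv f) = v := by rw [G.head_inv]; exact h
    have h4 := huniq _ h3
    rw [← G.inv_inv f, h4]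

end Multigraph

namespace Multigraph

/-- Deleting a leaf from a tangle yields a proper subgraph which is a tangle. -/
theorem leaf_case (ν : ℝ) (hν : 0 < ν) (r : ℤ) (ψ : Multigraph)
    (hconn : ψ.Connected) (hmu : ν ≤ ψ.mu1) (hord : ψ.ord < r)
    (v : ψ.V) (e : ψ.E) (he : ψ.head e = v) (hinv : ψ.inv e ≠ e)
    (huniq : ∀ f, ψ.head f = v → f = e) :
    ∃ S : ψ.Subgraph, S.Proper ∧ IsTangle ν r S.graph := by
  classical
  have hta : ψ.tail e ≠ v := by
    intro h
    apply hinv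
    apply huniq
    rw [ψ.head_inv, h]
  have htailv : ∀ f, ψ.tail f = v → f = ψ.inv e := by
    intro f hf
    have h3 : ψ.head (ψ.inv f) = v := by rw [ψ.head_inv]; exact hf
    have h4 := huniq _ h3
    rw [← ψ.inv_inv f, h4]
  set S : ψ.Subgraph := ψ.lsub huniq with hS
  have hmemta : ψ.tail e ∈ S.verts := hta
  refine ⟨S, Or.inl ?_, ?_, ?_, ?_⟩
  · intro h
    exact (Set.eq_univ_iff_forall.mp h v) rfl
  · -- Connectivity
    have hne' : Nonempty S.graph.V := ⟨⟨ψ.tail e, hmemta⟩⟩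
    refine ⟨hne', ?_⟩
    let π : ψ.V → S.graph.V := fun w => if h : w = v then ⟨ψ.tail e, hmemta⟩ else ⟨w, h⟩
    have hπpos : π v = ⟨ψ.tail e, hmemta⟩ := dif_pos rfl
    have hπneg : ∀ w (h : w ≠ v), π w = ⟨w, h⟩ := fun w h => dif_neg h
    have hstep : ∀ a b, ψ.Adj a b → Relation.ReflTransGen S.graph.Adj (π a) (π b) := by
      rintro a b ⟨f, rfl, rfl⟩
      by_cases hf1 : f = e
      · have h1 : π (ψ.head f) = ⟨ψ.tail e, hmemta⟩ := by rw [hf1, he]; exact hπpos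
        have h2 : π (ψ.tail f) = ⟨ψ.tail e, hmemta⟩ := by rw [hf1]; exact hπneg _ hta
        rw [h1, h2]
        exact Relation.ReflTransGen.refl
      · by_cases hf2 : f = ψ.inv e
        · have htl : ψ.tail f = v := by rw [hf2, ψ.tail_inv, he]
          have hhd : ψ.head f = ψ.tail e := by rw [hf2, ψ.head_inv]
          have h1 : π (ψ.tail f) = ⟨ψ.tail e, hmemta⟩ := by rw [htl]; exact hπpos
          have h2 : π (ψ.head f) = ⟨ψ.tail e, hmemta⟩ := by rw [hhd]; exact hπneg _ hta
          rw [h1, h2]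
          exact Relation.ReflTransGen.refl
        · have hfS : f ∈ S.edges := ⟨hf1, hf2⟩
          have h1 : ψ.tail f ≠ v := fun h => hf2 (htailv f h)
          have h2 : ψ.head f ≠ v := fun h => hf1 (huniq f h)
          rw [hπneg _ h1, hπneg _ h2]
          exact Relation.ReflTransGen.single ⟨⟨f, hfS⟩, rfl, rfl⟩
    intro x y
    have hx : π x.1 = x := by
      rw [hπneg x.1 x.2]
      exact Subtype.ext rfl
    have hy : π y.1 = y := by
      rw [hπneg y.1 y.2]
      exact Subtype.ext rfl
    have h : Relation.ReflTransGen S.graph.Adj (π x.1) (π y.1) :=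
      Relation.ReflTransGen.lift' π hstep _ _ (hconn.2 x.1 y.1)
    rwa [hx, hy] at h
  · -- mu1 of the subgraph
    have hrow_e : ∀ f, ψ.hashimoto e f = 0 := by
      intro f
      simp only [hashimoto]
      rw [if_neg]
      rintro ⟨h1, h2⟩
      apply h2
      symm
      apply htailv
      rw [← h1, he]
    have hcol : ∀ g, g ≠ e → ψ.hashimoto g (ψ.inv e) = 0 := by
      intro g hg
      simp only [hashimoto]
      rw [if_neg]
      rintro ⟨h1, -⟩
      rw [ψ.tail_inv, he] at h1
      exact hg (huniq g h1)
    have hdiag : ψ.hashimoto (ψ.inv e) (ψ.inv e) = 0 := by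
      simp only [hashimoto]
      rw [if_neg]
      rintro ⟨h1, -⟩
      rw [ψ.head_inv, ψ.tail_inv, he] at h1
      exact hta h1
    -- extract a top eigenvalue
    have hmu1 : ψ.mu1 = sSup {x : ℝ | ∃ z ∈ spectrum ℂ ψ.hashimoto, x = ‖z‖} := rfl
    have hAim : {x : ℝ | ∃ z ∈ spectrum ℂ ψ.hashimoto, x = ‖z‖}
        = (‖·‖) '' spectrum ℂ ψ.hashimoto := by
      ext x
      constructor
      · rintro ⟨z, hz, rfl⟩; exact ⟨z, hz, rfl⟩
      · rintro ⟨z, hz, rfl⟩; exact ⟨z, hz, rfl⟩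
    have hAfin : {x : ℝ | ∃ z ∈ spectrum ℂ ψ.hashimoto, x = ‖z‖}.Finite := by
      rw [hAim]; exact (Matrix.finite_spectrum _).image _
    have hAne : {x : ℝ | ∃ z ∈ spectrum ℂ ψ.hashimoto, x = ‖z‖}.Nonempty := by
      by_contra h
      rw [Set.not_nonempty_iff_eq_empty] at h
      rw [hmu1, h, Real.sSup_empty] at hmu
      linarith
    obtain ⟨z, hzmem, hzabs⟩ := hAne.csSup_mem hAfin
    have hzν : ν ≤ ‖z‖ := by
      rw [← hzabs, ← hmu1]; exact hmu
    have hz0 : z ≠ 0 := by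
      intro h
      rw [h] at hzν
      simp at hzν
      linarith
    obtain ⟨u, hu0, huz⟩ := (mem_spectrum_iff_eig ψ.hashimoto z).mp hzmem
    have hpt : ∀ g, ∑ f, ψ.hashimoto g f * u f = z * u g := by
      intro g
      have h := congrFun huz g
      simpa [Matrix.mulVec, dotProduct] using h
    have hue : u e = 0 := by
      have h := hpt e
      rw [Finset.sum_eq_zero (fun f _ => by rw [hrow_e f, zero_mul])] at h
      exact ((mul_eq_zero.mp h.symm).resolve_left hz0)
    have hexg : ∃ g : ψ.E, (g ≠ e ∧ g ≠ ψ.inv e) ∧ u g ≠ 0 := by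
      by_contra hno
      push_neg at hno
      have huinv : u (ψ.inv e) = 0 := by
        have h := hpt (ψ.inv e)
        rw [Finset.sum_eq_zero] at h
        · exact ((mul_eq_zero.mp h.symm).resolve_left hz0)
        · intro f _
          by_cases h1 : f = e
          · rw [h1, hue, mul_zero]
          · by_cases h2 : f = ψ.inv e
            · rw [h2, hdiag, zero_mul]
            · rw [hno f ⟨h1, h2⟩, mul_zero]
      apply hu0
      funext f
      by_cases h1 : f = e
      · rw [h1, hue]; rfl
      · by_cases h2 : f = ψ.inv e
        · rw [h2, huinv]; rfl
        · rw [hno f ⟨h1, h2⟩]; rfl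
    obtain ⟨g₀, hg₀S, hg₀u⟩ := hexg
    have hHH : ∀ (g f : S.graph.E), S.graph.hashimoto g f = ψ.hashimoto g.1 f.1 := by
      intro g f
      have hiff : (S.graph.head g = S.graph.tail f ∧ S.graph.inv g ≠ f)
          ↔ (ψ.head g.1 = ψ.tail f.1 ∧ ψ.inv g.1 ≠ f.1) := by
        simp [Subgraph.graph, Subtype.ext_iff]
        exact fun _ => Subtype.ext_iff.not
      simp only [hashimoto]
      rw [if_congr hiff rfl rfl]
    set u' : S.graph.E → ℂ := fun f => u f.1 with hu'
    have hu'0 : u' ≠ 0 := by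
      intro h
      apply hg₀u
      have := congrFun h ⟨g₀, hg₀S⟩
      exact this
    have heq' : S.graph.hashimoto.mulVec u' = z • u' := by
      funext g
      simp only [Matrix.mulVec, dotProduct, Pi.smul_apply, smul_eq_mul]
      have hg := hpt g.1
      have hge : g.1 ≠ e := g.2.1
      have hsplit : ∑ f ∈ Finset.univ.filter (fun f => f ∈ S.edges),
          ψ.hashimoto g.1 f * u f = ∑ f : ψ.E, ψ.hashimoto g.1 f * u f := by
        apply Finset.sum_subset (Finset.subset_univ _)
        intro f _ hf
        simp only [Finset.mem_filter, Finset.mem_univ, true_and] at hf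
        by_cases h1 : f = e
        · rw [h1, hue, mul_zero]
        · have h2 : f = ψ.inv e := by
            by_contra h2
            exact hf ⟨h1, h2⟩
          rw [h2, hcol g.1 hge, zero_mul]
      calc ∑ f : S.graph.E, S.graph.hashimoto g f * u' f
          = ∑ f : S.graph.E, ψ.hashimoto g.1 f.1 * u f.1 := by
            apply Finset.sum_congr rfl
            intro f _
            rw [hHH]
        _ = ∑ f ∈ Finset.univ.filter (fun f => f ∈ S.edges), ψ.hashimoto g.1 f * u f := by
            apply Finset.sum_bij (fun (x : S.graph.E) _ => x.1)
            · intro a _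
              simp only [Finset.mem_filter, Finset.mem_univ, true_and]
              exact a.2
            · intro a _ b _ h
              exact Subtype.ext h
            · intro b hb
              simp only [Finset.mem_filter, Finset.mem_univ, true_and] at hb
              exact ⟨⟨b, hb⟩, Finset.mem_univ _, rfl⟩
            · intro a _
              rfl
        _ = ∑ f : ψ.E, ψ.hashimoto g.1 f * u f := hsplit
        _ = z * u g.1 := hg
    have hzS : z ∈ spectrum ℂ S.graph.hashimoto :=
      (mem_spectrum_iff_eig S.graph.hashimoto z).mpr ⟨u', hu'0, heq'⟩
    have hbdd : BddAbove {x : ℝ | ∃ w ∈ spectrum ℂ S.graph.hashimoto, x = ‖w‖} := by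
      apply Set.Finite.bddAbove
      have him : {x : ℝ | ∃ w ∈ spectrum ℂ S.graph.hashimoto, x = ‖w‖}
          = (‖·‖) '' spectrum ℂ S.graph.hashimoto := by
        ext x
        constructor
        · rintro ⟨w, hw, rfl⟩; exact ⟨w, hw, rfl⟩
        · rintro ⟨w, hw, rfl⟩; exact ⟨w, hw, rfl⟩
      rw [him]
      exact (Matrix.finite_spectrum _).image _
    exact hzν.trans (le_csSup hbdd ⟨z, hzS, rfl⟩)
  · -- ord
    have hE1 : S.graph.edgeCard + 1 = ψ.edgeCard := by
      set ι : Quot S.graph.edgeRel → Quot ψ.edgeRel :=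
        Quot.lift (fun f => Quot.mk ψ.edgeRel f.1)
          (by
            rintro a b (h | h)
            · rw [h]
            · rw [h]
              exact Quot.sound (Or.inr rfl)) with hι
      have hinj : Function.Injective ι := by
        intro q q' h
        obtain ⟨a, rfl⟩ := Quot.exists_rep q
        obtain ⟨b, rfl⟩ := Quot.exists_rep q'
        change Quot.mk ψ.edgeRel a.1 = Quot.mk ψ.edgeRel b.1 at h
        rw [ψ.quot_mk_eq_iff] at h
        apply Quot.sound
        rcases h with h | h
        · exact Or.inl (Subtype.ext h)
        · exact Or.inr (Subtype.ext h)
      have hne2 : ∀ q', ι q' ≠ Quot.mk ψ.edgeRel e := by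
        intro q'
        obtain ⟨f, rfl⟩ := Quot.exists_rep q'
        change Quot.mk ψ.edgeRel f.1 ≠ _
        rw [Ne, ψ.quot_mk_eq_iff]
        rintro (h | h)
        · exact f.2.1 h.symm
        · apply f.2.2
          rw [h, ψ.inv_inv]
      have hrange : ∀ q : Quot ψ.edgeRel, q ≠ Quot.mk ψ.edgeRel e → ∃ q', ι q' = q := by
        intro q hq
        obtain ⟨f, rfl⟩ := Quot.exists_rep q
        have hf1 : f ≠ e := by
          intro h
          exact hq (by rw [h])
        have hf2 : f ≠ ψ.inv e := by
          intro h
          apply hq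
          rw [h]
          exact Quot.sound (Or.inr (ψ.inv_inv e).symm)
        exact ⟨Quot.mk _ ⟨f, ⟨hf1, hf2⟩⟩, rfl⟩
      have hcongr : Nat.card (Quot S.graph.edgeRel)
          = Nat.card {q : Quot ψ.edgeRel // q ≠ Quot.mk ψ.edgeRel e} := by
        apply Nat.card_congr
        refine Equiv.ofBijective (fun q' => ⟨ι q', hne2 q'⟩) ⟨?_, ?_⟩
        · intro a b h
          exact hinj (Subtype.ext_iff.mp h)
        · rintro ⟨q, hq⟩
          obtain ⟨q', hq'⟩ := hrange q hq
          exact ⟨q', Subtype.ext hq'⟩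
      have := card_ne_add_one (Quot.mk ψ.edgeRel e)
      rw [Multigraph.edgeCard, Multigraph.edgeCard, hcongr]
      exact this
    have hV1 : Nat.card S.graph.V + 1 = Nat.card ψ.V := by
      have h1 : Nat.card S.graph.V = Nat.card {w : ψ.V // w ≠ v} :=
        Nat.card_congr (Equiv.subtypeEquivRight (fun w => Iff.rfl))
      rw [h1]
      exact card_ne_add_one v
    have hordeq : S.graph.ord = ψ.ord := by
      unfold Multigraph.ord
      omega
    rw [hordeq]
    exact hord

end Multigraph
/-- Let `ν > 1` be a real number and `r` an integer, and let `ψ` be a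
minimal `(≥ν,<r)`-tangle.  Then `ord(ψ) ≥ 1`. -/
theorem minimal_tangle_order_pos (ν : ℝ) (hν : 1 < ν) (r : ℤ) (ψ : Multigraph)
    (hψ : IsMinimalTangle ν r ψ) : 1 ≤ ψ.ord := by
  by_contra hcon
  obtain ⟨⟨hconn, hmu, hordr⟩, hmin⟩ := hψ
  have hν0 : (0:ℝ) < ν := by linarith
  have h0 : ψ.ord ≤ 0 := by omega
  have hcontra : ¬ (ψ.mu1 ≤ 1) := by intro h; linarith
  by_cases hE : IsEmpty ψ.E
  · exact hcontra (ψ.mu1_empty_le hE)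
  have hEne : Nonempty ψ.E := not_isEmpty_iff.mp hE
  by_cases hpr : ∀ w, 2 ≤ ψ.degree w
  · -- pruned case: all degrees at most 2, so `mu1 ≤ 1`
    have hec : ψ.edgeCard ≤ Nat.card ψ.V := by
      unfold Multigraph.ord at h0
      omega
    have hsum : ∑ w : ψ.V, ψ.degree w ≤ ∑ w : ψ.V, 2 := by
      rw [ψ.sum_degree]
      calc Fintype.card ψ.E ≤ 2 * ψ.edgeCard := ψ.card_E_le
        _ ≤ 2 * Nat.card ψ.V := by omega
        _ = ∑ _w : ψ.V, 2 := by
            simp [Finset.sum_const, Finset.card_univ, Nat.card_eq_fintype_card, mul_comm]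
    have hdeg : ∀ w, ψ.degree w ≤ 2 := by
      by_contra hw
      push_neg at hw
      obtain ⟨w0, hw0⟩ := hw
      have : ∑ _w : ψ.V, 2 < ∑ w : ψ.V, ψ.degree w :=
        Finset.sum_lt_sum (fun i _ => hpr i) ⟨w0, Finset.mem_univ _, hw0⟩
      omega
    exact hcontra (ψ.mu1_le_one hdeg)
  · push_neg at hpr
    obtain ⟨v, hv⟩ := hpr
    by_cases hd0 : ψ.degree v = 0
    · -- a vertex of degree 0
      have hempty : IsEmpty {f : ψ.E // ψ.head f = v} := by
        have h := hd0
        rw [Multigraph.degree] at h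
        rcases Nat.card_eq_zero.mp h with h' | h'
        · exact h'
        · exact absurd h' (not_infinite_iff_finite.mpr inferInstance)
      have hnohead : ∀ f, ψ.head f ≠ v := fun f hf => hempty.false ⟨f, hf⟩
      by_cases hw : ∀ w : ψ.V, w = v
      · obtain ⟨f⟩ := hEne
        exact hnohead f (hw _)
      · push_neg at hw
        obtain ⟨w, hwv⟩ := hw
        rcases (hconn.2 w v).cases_tail with h | ⟨c, -, hadj⟩
        · exact hwv h.symm
        · obtain ⟨f, -, hf⟩ := hadj
          exact hnohead f hf
    · -- a vertex of degree 1
      have hd1 : ψ.degree v = 1 := by omega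
      rw [Multigraph.degree] at hd1
      obtain ⟨hsub, ⟨⟨e, he⟩⟩⟩ := Nat.card_eq_one_iff_unique.mp hd1
      have huniq : ∀ f, ψ.head f = v → f = e := by
        intro f hf
        exact Subtype.ext_iff.mp (hsub.elim ⟨f, hf⟩ ⟨e, he⟩)
      by_cases hinv : ψ.inv e = e
      · -- half-loop: single vertex, single edge, Hashimoto matrix is zero
        have hloopall : ∀ w : ψ.V, w = v := by
          have key : ∀ a b, Relation.ReflTransGen ψ.Adj a b → a = v → b = v := by
            intro a b h
            induction h with
            | refl => exact fun h => h
            | tail hrt hadj ih =>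
              intro hav
              have hbv := ih hav
              obtain ⟨f, hft, hfh⟩ := hadj
              rw [hbv] at hft
              have h2 : ψ.head (ψ.inv f) = v := by rw [ψ.head_inv]; exact hft
              have h3 : ψ.inv f = e := huniq _ h2
              have h4 : f = e := by rw [← ψ.inv_inv f, h3, hinv]
              rw [← hfh, h4, he]
          exact fun w => key v w (hconn.2 v w) rfl
        have healledge : ∀ f : ψ.E, f = e := fun f => huniq f (hloopall _)
        have hspec : ∀ z ∈ spectrum ℂ ψ.hashimoto, ‖z‖ ≤ 1 := by
          intro z hz
          obtain ⟨u, hu0, huz⟩ := (Multigraph.mem_spectrum_iff_eig ψ.hashimoto z).mp hz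
          have hz0 : z = 0 := by
            obtain ⟨i, hi⟩ := Function.ne_iff.mp hu0
            have h := congrFun huz i
            simp only [Matrix.mulVec, dotProduct, Pi.smul_apply, smul_eq_mul] at h
            rw [Finset.sum_eq_zero] at h
            · exact (mul_eq_zero.mp h.symm).resolve_right hi
            · intro f _
              have hval : ψ.hashimoto i f = 0 := by
                rw [healledge f, healledge i]
                simp only [Multigraph.hashimoto]
                rw [if_neg]
                rintro ⟨-, h2⟩
                exact h2 hinv
              rw [hval, zero_mul]
          rw [hz0]
          simp
        exact hcontra (ψ.mu1_le_of_bound zero_le_one hspec)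
      · -- genuine leaf: delete it, contradicting minimality
        obtain ⟨S, hSP, hST⟩ :=
          Multigraph.leaf_case ν hν0 r ψ hconn hmu hordr v e he hinv huniq
        exact hmin S hSP hST
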